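/- Let U : ℝ → M_n(ℂ) be differentiable with U(0) = I, let P : ℝ → M_n(ℂ) satisfy U′(t) = P(t) U(t) for all t ∈ ℝ, and suppose P(t) is skew-adjoint (P(t)ᴴ = −P(t)) for every t. Then U(t) is unitary (U(t) U(t)ᴴ = I) for every t ∈ ℝ. -/

import Mathlib

open Matrix

attribute [local instance] Matrix.normedAddCommGroup Matrix.normedSpace

/-- if `U'(t) = P(t) U(t)` with `U(0) = I` and each `P(t)` skew-adjoint,
then `U(t)` is unitary for every `t`. -/
theorem unitary_of_skew_adjoint_generator (n : ℕ)
    (U P : ℝ → Matrix (Fin n) (Fin n) ℂ)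
    (hU0 : U 0 = 1)
    (hU : ∀ t : ℝ, HasDerivAt U (P t * U t) t)
    (hP : ∀ t : ℝ, (P t)ᴴ = -(P t)) :
    ∀ t : ℝ, U t * (U t)ᴴ = 1 := by
  let CT : Matrix (Fin n) (Fin n) ℂ →L[ℝ] Matrix (Fin n) (Fin n) ℂ :=
    LinearMap.toContinuousLinearMap
      { toFun := fun A => Aᴴ
        map_add' := fun A B => conjTranspose_add A B
        map_smul' := fun (c : ℝ) A => by
          ext i j
          simp [Matrix.conjTranspose_apply, Matrix.smul_apply, Complex.real_smul,
            Complex.conj_ofReal] }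
  have hCT : ∀ t, HasDerivAt (fun s => (U s)ᴴ) (P t * U t)ᴴ t := fun t =>
    (CT.hasFDerivAt.comp_hasDerivAt t (hU t))
  let B : Matrix (Fin n) (Fin n) ℂ →L[ℝ] Matrix (Fin n) (Fin n) ℂ →L[ℝ] Matrix (Fin n) (Fin n) ℂ :=
    LinearMap.toContinuousLinearMap
      ((LinearMap.toContinuousLinearMap.toLinearMap) ∘ₗ
        (LinearMap.mul ℝ (Matrix (Fin n) (Fin n) ℂ)))
  have hB : ∀ A C, B A C = A * C := fun A C => rfl
  have hF : ∀ t, HasDerivAt (fun s => (U s)ᴴ * U s)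
      ((P t * U t)ᴴ * U t + (U t)ᴴ * (P t * U t)) t := by
    intro t
    letI : NormedRing (Matrix (Fin n) (Fin n) ℂ) := Matrix.linftyOpNormedRing
    letI : NormedAlgebra ℝ (Matrix (Fin n) (Fin n) ℂ) := Matrix.linftyOpNormedAlgebra
    exact (hCT t).mul (hU t)
  have hF0 : ∀ t, HasDerivAt (fun s => (U s)ᴴ * U s) 0 t := by
    intro t
    have h := hF t
    have : (P t * U t)ᴴ * U t + (U t)ᴴ * (P t * U t) = 0 := by
      rw [conjTranspose_mul, hP t]
      simp [Matrix.mul_assoc, Matrix.neg_mul, Matrix.mul_neg]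
    rwa [this] at h
  have hconst : ∀ t, (U t)ᴴ * U t = (U 0)ᴴ * U 0 := by
    intro t
    exact is_const_of_deriv_eq_zero (fun x => (hF0 x).differentiableAt)
      (fun x => (hF0 x).deriv) t 0
  intro t
  have h1 : (U t)ᴴ * U t = 1 := by rw [hconst t, hU0]; simp
  exact mul_eq_one_comm.mp h1
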